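/- Let F be the free group on generators y₀, y₁, y₂ and set y₋₁ = (y₀y₁y₂)⁻¹. Then [[y₀,y₁], [y₀, y₁y₂]] ∉ [[y₋₁, y₀, y₁, y₂]]. (This element corresponds to the homotopy class of the composition S⁴ → S³ → S² of suspended Hopf maps, a generator of π₄(S²) ≅ ℤ/2.) -/

import Mathlib

open scoped commutatorElement

/-- The left-normed (left-ordered) commutator `[a, b₁, b₂, …, b_t] = [[…[[a,b₁],b₂]…],b_t]`,
where `[a,b] = aba⁻¹b⁻¹`. -/
def leftNormedCommutator {G : Type*} [Group G] : G → List G → G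
  | a, [] => a
  | a, b :: l => leftNormedCommutator ⁅a, b⁆ l

/-- The letter `(w i)^ε` for a sign `ε = ±1` (coded by a `Bool`). -/
def signedLetter {G : Type*} [Group G] {ι : Type*} (w : ι → G) : ι × Bool → G
  | (i, true) => w i
  | (i, false) => (w i)⁻¹

/-- The set of all left-normed commutators `[z₁^{ε₁}, …, z_t^{ε_t}]` with `εᵢ = ±1`,
`zᵢ ∈ {w i | i : ι}`, in which every letter `w i` occurs at least once. -/
def fatCommutatorSet {G : Type*} [Group G] {ι : Type*} (w : ι → G) : Set G :=
  { g | ∃ (z : ι × Bool) (l : List (ι × Bool)),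
      (∀ i : ι, i ∈ ((z :: l).map Prod.fst)) ∧
      g = leftNormedCommutator (signedLetter w z) (l.map (signedLetter w)) }

/-- `[[w₁, …, w_k]]`: the normal closure of the set of left-normed commutators with
(signed) entries from `{w i}` in which every `w i` appears at least once. -/
def fatCommutator {G : Type*} [Group G] {ι : Type*} (w : ι → G) : Subgroup G :=
  Subgroup.normalClosure (fatCommutatorSet w)

/-- The family of letters `y₋₁, y₀, …, y_{n-1}` in the free group `F` on `y₀, …, y_{n-1}`,
where `y₋₁ = (y₀ ⋯ y_{n-1})⁻¹`; the index `0 : Fin (n+1)` encodes `y₋₁` and `i+1`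
encodes `yᵢ`. -/
def wuLetter (n : ℕ) : Fin (n + 1) → FreeGroup (Fin n) :=
  Fin.cases ((List.ofFn fun i : Fin n => FreeGroup.of i).prod)⁻¹ fun i => FreeGroup.of i

/-- The generators `y₀, y₁, y₂` of the free group on three letters. -/
abbrev y : Fin 3 → FreeGroup (Fin 3) := FreeGroup.of

/-! ### Auxiliary: the group `UT` of unitriangular 5×5 matrices over `𝔽₂`,
encoded by its 10 strictly-upper entries. Fields `e*` are the superdiagonal,
`f*` the second superdiagonal, `g*` the third, `h` the corner `(1,5)` entry. -/

structure UT : Type where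
  e1 : ZMod 2
  e2 : ZMod 2
  e3 : ZMod 2
  e4 : ZMod 2
  f1 : ZMod 2
  f2 : ZMod 2
  f3 : ZMod 2
  g1 : ZMod 2
  g2 : ZMod 2
  h : ZMod 2
deriving DecidableEq

namespace UT

def mul (x y : UT) : UT :=
  ⟨x.e1 + y.e1, x.e2 + y.e2, x.e3 + y.e3, x.e4 + y.e4,
   x.f1 + y.f1 + x.e1 * y.e2,
   x.f2 + y.f2 + x.e2 * y.e3,
   x.f3 + y.f3 + x.e3 * y.e4,
   x.g1 + y.g1 + x.e1 * y.f2 + x.f1 * y.e3,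
   x.g2 + y.g2 + x.e2 * y.f3 + x.f2 * y.e4,
   x.h + y.h + x.e1 * y.g2 + x.f1 * y.f3 + x.g1 * y.e4⟩

def inv (x : UT) : UT :=
  ⟨-x.e1, -x.e2, -x.e3, -x.e4,
   -x.f1 + x.e1 * x.e2,
   -x.f2 + x.e2 * x.e3,
   -x.f3 + x.e3 * x.e4,
   -x.g1 + x.e1 * x.f2 + x.f1 * x.e3 - x.e1 * x.e2 * x.e3,
   -x.g2 + x.e2 * x.f3 + x.f2 * x.e4 - x.e2 * x.e3 * x.e4,
   -x.h + x.e1 * x.g2 + x.f1 * x.f3 + x.g1 * x.e4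
     - x.e1 * x.e2 * x.f3 - x.e1 * x.f2 * x.e4 - x.f1 * x.e3 * x.e4
     + x.e1 * x.e2 * x.e3 * x.e4⟩

def one : UT := ⟨0,0,0,0,0,0,0,0,0,0⟩

lemma mul_assoc' (x y z : UT) : mul (mul x y) z = mul x (mul y z) := by
  cases x; cases y; cases z
  simp only [mul, mk.injEq]
  refine ⟨?_,?_,?_,?_,?_,?_,?_,?_,?_,?_⟩ <;> ring

lemma one_mul' (x : UT) : mul one x = x := by
  cases x
  simp only [mul, one, mk.injEq]
  refine ⟨?_,?_,?_,?_,?_,?_,?_,?_,?_,?_⟩ <;> ring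

lemma mul_one' (x : UT) : mul x one = x := by
  cases x
  simp only [mul, one, mk.injEq]
  refine ⟨?_,?_,?_,?_,?_,?_,?_,?_,?_,?_⟩ <;> ring

lemma inv_mul' (x : UT) : mul (inv x) x = one := by
  cases x
  simp only [mul, inv, one, mk.injEq]
  refine ⟨?_,?_,?_,?_,?_,?_,?_,?_,?_,?_⟩ <;> ring

instance : Group UT :=
  { mul := mul
    one := one
    inv := inv
    mul_assoc := mul_assoc'
    one_mul := one_mul'
    mul_one := mul_one'
    inv_mul_cancel := inv_mul' }

lemma mul_def (x y : UT) : x * y = mul x y := rfl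
lemma inv_def (x : UT) : x⁻¹ = inv x := rfl

/-- depth ≥ 2 : superdiagonal vanishes. -/
def D2 (x : UT) : Prop := x.e1 = 0 ∧ x.e2 = 0 ∧ x.e3 = 0 ∧ x.e4 = 0
/-- depth ≥ 3. -/
def D3 (x : UT) : Prop := D2 x ∧ x.f1 = 0 ∧ x.f2 = 0 ∧ x.f3 = 0
/-- depth ≥ 4. -/
def D4 (x : UT) : Prop := D3 x ∧ x.g1 = 0 ∧ x.g2 = 0

lemma commD2 (x y : UT) : D2 ⁅x, y⁆ := by
  cases x; cases y
  simp only [commutatorElement_def, mul_def, inv_def, mul, inv, D2]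
  refine ⟨?_,?_,?_,?_⟩ <;> ring

lemma commD3 (x y : UT) (hx : D2 x) : D3 ⁅x, y⁆ := by
  cases x; cases y
  obtain ⟨h1, h2, h3, h4⟩ := hx
  dsimp only at h1 h2 h3 h4
  subst h1 h2 h3 h4
  simp only [commutatorElement_def, mul_def, inv_def, mul, inv, D3, D2]
  refine ⟨⟨?_,?_,?_,?_⟩,?_,?_,?_⟩ <;> ring

lemma commD4 (x y : UT) (hx : D3 x) : D4 ⁅x, y⁆ := by
  cases x; cases y
  obtain ⟨⟨h1, h2, h3, h4⟩, h5, h6, h7⟩ := hx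
  dsimp only at h1 h2 h3 h4 h5 h6 h7
  subst h1 h2 h3 h4 h5 h6 h7
  simp only [commutatorElement_def, mul_def, inv_def, mul, inv, D4, D3, D2]
  refine ⟨⟨⟨?_,?_,?_,?_⟩,?_,?_,?_⟩,?_,?_⟩ <;> ring

lemma central (x y : UT) (hx : D4 x) : x * y = y * x := by
  cases x; cases y
  obtain ⟨⟨⟨h1, h2, h3, h4⟩, h5, h6, h7⟩, h8, h9⟩ := hx
  dsimp only at h1 h2 h3 h4 h5 h6 h7 h8 h9
  subst h1 h2 h3 h4 h5 h6 h7 h8 h9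
  simp only [mul_def, mul, mk.injEq]
  refine ⟨?_,?_,?_,?_,?_,?_,?_,?_,?_,?_⟩ <;> ring

lemma comm_eq_one (x y : UT) (hx : D4 x) : ⁅x, y⁆ = 1 :=
  commutatorElement_eq_one_iff_mul_comm.mpr (central x y hx)

/-- Images of the generators `y₀, y₁, y₂`. -/
def A : UT := ⟨0,1,0,1, 0,0,0, 0,0, 0⟩
def B : UT := ⟨0,1,1,0, 0,0,0, 0,0, 0⟩
def C : UT := ⟨1,1,0,1, 0,0,0, 0,0, 0⟩
def D : UT := (A * B * C)⁻¹

/-- Images of the four letters `y₋₁, y₀, y₁, y₂`. -/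
def Wv : Fin 4 → UT := ![D, A, B, C]

end UT

open UT

set_option maxHeartbeats 12000000 in
/-- All weight-4 fat commutators vanish in `UT` (finite check). -/
lemma key4 : ∀ z p q r : Fin 4 × Bool,
    (∀ i : Fin 4, i ∈ [z.1, p.1, q.1, r.1]) →
    ⁅⁅⁅signedLetter Wv z, signedLetter Wv p⁆, signedLetter Wv q⁆, signedLetter Wv r⁆ = 1 := by
  decide

lemma lnc_one {G : Type*} [Group G] (l : List G) :
    leftNormedCommutator (1 : G) l = 1 := by
  induction l with
  | nil => rfl
  | cons b l ih =>
      have : ⁅(1 : G), b⁆ = 1 := by simp [commutatorElement_def]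
      simpa [leftNormedCommutator, this] using ih

lemma map_lnc {G H : Type*} [Group G] [Group H] (f : G →* H) (x : G) (l : List G) :
    f (leftNormedCommutator x l) = leftNormedCommutator (f x) (l.map f) := by
  induction l generalizing x with
  | nil => rfl
  | cons b l ih =>
      simp only [leftNormedCommutator, List.map_cons, ← map_commutatorElement]
      exact ih _

/-- The homomorphism `F → UT`. -/
def φ : FreeGroup (Fin 3) →* UT := FreeGroup.lift ![A, B, C]

lemma hV : ∀ j : Fin 4, φ (wuLetter 3 j) = Wv j := by
  intro j
  fin_cases j
  · show φ ((List.ofFn fun i : Fin 3 => FreeGroup.of i).prod)⁻¹ = UT.D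
    rw [map_inv, show UT.D = (A * B * C)⁻¹ from rfl]
    congr 1
  · show φ (FreeGroup.of 0) = A
    simp [φ]
  · show φ (FreeGroup.of 1) = B
    simp [φ]
  · show φ (FreeGroup.of 2) = C
    simp [φ]

lemma hsl : ∀ p : Fin 4 × Bool, φ (signedLetter (wuLetter 3) p) = signedLetter Wv p := by
  rintro ⟨i, (_ | _)⟩ <;> simp [signedLetter, map_inv, hV i]

/-- Every fat commutator maps to `1` under `φ`. -/
lemma main2 : ∀ (z : Fin 4 × Bool) (l : List (Fin 4 × Bool)),
    (∀ i : Fin 4, i ∈ ((z :: l).map Prod.fst)) →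
    leftNormedCommutator (signedLetter Wv z) (l.map (signedLetter Wv)) = 1 := by
  intro z l hcov
  match l with
  | [] =>
      have hno : ∀ x : Fin 4, ¬ (∀ i : Fin 4, i ∈ [x]) := by decide
      simp only [List.map_cons, List.map_nil] at hcov
      exact absurd hcov (hno z.1)
  | [p] =>
      have hno : ∀ x u : Fin 4, ¬ (∀ i : Fin 4, i ∈ [x, u]) := by decide
      simp only [List.map_cons, List.map_nil] at hcov
      exact absurd hcov (hno z.1 p.1)
  | [p, q] =>
      have hno : ∀ x u v : Fin 4, ¬ (∀ i : Fin 4, i ∈ [x, u, v]) := by decide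
      simp only [List.map_cons, List.map_nil] at hcov
      exact absurd hcov (hno z.1 p.1 q.1)
  | p :: q :: r :: rest =>
      have hD4 : D4 ⁅⁅⁅signedLetter Wv z, signedLetter Wv p⁆, signedLetter Wv q⁆,
          signedLetter Wv r⁆ :=
        commD4 _ _ (commD3 _ _ (commD2 _ _))
      match rest with
      | [] =>
          have hcov' : ∀ i : Fin 4, i ∈ [z.1, p.1, q.1, r.1] := by
            simpa using hcov
          simpa [leftNormedCommutator] using key4 z p q r hcov'
      | s :: rest' =>
          show leftNormedCommutator _ _ = 1
          simp only [List.map_cons, leftNormedCommutator]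
          rw [comm_eq_one _ _ hD4]
          exact lnc_one _

/-- in the free group `F` on `y₀, y₁, y₂`, with `y₋₁ = (y₀y₁y₂)⁻¹`, the
element `[[y₀,y₁], [y₀, y₁y₂]]` does not lie in `[[y₋₁, y₀, y₁, y₂]]`.  (It corresponds
to the composite `S⁴ → S³ → S²` of suspended Hopf maps, a generator of `π₄(S²) ≅ ℤ/2`.) -/
theorem hopf_comp_not_mem :
    ⁅⁅y 0, y 1⁆, ⁅y 0, y 1 * y 2⁆⁆ ∉ fatCommutator (wuLetter 3) := by
  intro hmem
  have hker : fatCommutator (wuLetter 3) ≤ φ.ker := by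
    apply Subgroup.normalClosure_le_normal
    intro g hg
    obtain ⟨z, l, hcov, rfl⟩ := hg
    rw [SetLike.mem_coe, MonoidHom.mem_ker]
    rw [map_lnc, List.map_map]
    rw [show (φ : FreeGroup (Fin 3) → UT) ∘ signedLetter (wuLetter 3) = signedLetter Wv from
      funext hsl, hsl z]
    exact main2 z l hcov
  have h1 : φ ⁅⁅y 0, y 1⁆, ⁅y 0, y 1 * y 2⁆⁆ = 1 := hker hmem
  rw [map_commutatorElement, map_commutatorElement, map_commutatorElement, map_mul] at h1
  have ha : φ (y 0) = A := by simp [φ]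
  have hb : φ (y 1) = B := by simp [φ]
  have hc : φ (y 2) = C := by simp [φ]
  rw [ha, hb, hc] at h1
  exact absurd h1 (by decide)
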